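/- For every N ≥ 1, the function g : ℝ² → ℝ defined by g(z) = N|z|² − log e_N(N|z|²) is convex on ℝ². Equivalently, the function t ↦ t − log e_N(t) is nondecreasing and convex on [0,∞), and the probability measure on ℝ² with density φ^{1,N}(z) = π^{−1} e^{−N|z|²} e_N(N|z|²) is log-concave. -/

import Mathlib

open MeasureTheory Real

/-- Truncated exponential series `e_N(t) = ∑_{ℓ=0}^{N-1} tˡ/ℓ!`. -/
noncomputable def eN (N : ℕ) (t : ℝ) : ℝ := ∑ ℓ ∈ Finset.range N, t ^ ℓ / (Nat.factorial ℓ)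

/-- One-particle marginal density `φ^{1,N}(z) = π⁻¹ e^{-N|z|²} e_N(N|z|²)` on `ℝ²`. -/
noncomputable def phi1 (N : ℕ) (z : EuclideanSpace ℝ (Fin 2)) : ℝ :=
  (Real.pi)⁻¹ * Real.exp (-(N : ℝ) * ‖z‖ ^ 2) * eN N ((N : ℝ) * ‖z‖ ^ 2)

lemma eN_succ (M : ℕ) (t : ℝ) : eN (M + 1) t = eN M t + t ^ M / (Nat.factorial M) :=
  Finset.sum_range_succ _ _

lemma eN_nonneg (M : ℕ) {t : ℝ} (ht : 0 ≤ t) : 0 ≤ eN M t := by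
  apply Finset.sum_nonneg
  intro i _
  positivity

lemma eN_pos {M : ℕ} (hM : 1 ≤ M) {t : ℝ} (ht : 0 ≤ t) : 0 < eN M t := by
  have h1 : (1 : ℝ) ≤ eN M t := by
    have := Finset.single_le_sum (f := fun ℓ => t ^ ℓ / (Nat.factorial ℓ : ℝ))
      (fun i _ => by positivity) (Finset.mem_range.2 hM)
    simpa [eN] using this
  linarith

lemma eN_hasDerivAt (M : ℕ) (t : ℝ) : HasDerivAt (eN M) (eN (M - 1) t) t := by
  have h : HasDerivAt (fun t : ℝ => ∑ ℓ ∈ Finset.range M, t ^ ℓ / (Nat.factorial ℓ))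
      (∑ ℓ ∈ Finset.range M, (ℓ : ℝ) * t ^ (ℓ - 1) / (Nat.factorial ℓ)) t :=
    HasDerivAt.fun_sum fun ℓ _ => (hasDerivAt_pow ℓ t).div_const _
  have heq : (∑ ℓ ∈ Finset.range M, (ℓ : ℝ) * t ^ (ℓ - 1) / (Nat.factorial ℓ)) = eN (M - 1) t := by
    cases M with
    | zero => simp [eN]
    | succ m =>
      rw [Finset.sum_range_succ']
      simp only [Nat.cast_zero, zero_mul, zero_div, add_zero, Nat.succ_sub_one]
      unfold eN
      apply Finset.sum_congr rfl
      intro i _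
      have hfac : ((Nat.factorial i : ℝ)) ≠ 0 := by
        exact_mod_cast (Nat.factorial_pos i).ne'
      rw [Nat.factorial_succ]
      push_cast
      field_simp
  rw [← heq]
  exact h

lemma eN_continuous (M : ℕ) : Continuous (eN M) :=
  continuous_iff_continuousAt.2 fun t => (eN_hasDerivAt M t).continuousAt

lemma eN_key (M : ℕ) {t : ℝ} (ht : 0 ≤ t) : t * eN M t ≤ (M : ℝ) * eN (M + 1) t := by
  unfold eN
  rw [Finset.mul_sum, Finset.mul_sum, Finset.sum_range_succ']
  have h1 : ∀ i ∈ Finset.range M,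
      t * (t ^ i / (Nat.factorial i)) ≤ (M : ℝ) * (t ^ (i + 1) / (Nat.factorial (i + 1))) := by
    intro i hi
    rw [Finset.mem_range] at hi
    have hfac : ((Nat.factorial i : ℝ)) ≠ 0 := by exact_mod_cast (Nat.factorial_pos i).ne'
    have heq : t * (t ^ i / (Nat.factorial i))
        = ((i : ℝ) + 1) * (t ^ (i + 1) / (Nat.factorial (i + 1))) := by
      rw [Nat.factorial_succ]
      push_cast
      field_simp
      ring
    rw [heq]
    have htp : (0 : ℝ) ≤ t ^ (i + 1) / (Nat.factorial (i + 1)) := by positivity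
    have hiM : ((i : ℝ) + 1) ≤ (M : ℝ) := by exact_mod_cast hi
    nlinarith
  calc ∑ i ∈ Finset.range M, t * (t ^ i / (Nat.factorial i))
      ≤ ∑ i ∈ Finset.range M, (M : ℝ) * (t ^ (i + 1) / (Nat.factorial (i + 1))) :=
        Finset.sum_le_sum h1
    _ ≤ _ := by
        simp only [pow_zero, Nat.factorial_zero, Nat.cast_one]
        have : (0 : ℝ) ≤ (M : ℝ) * ((1 : ℝ) / 1) := by positivity
        linarith

lemma eN_logconcave (M : ℕ) {t : ℝ} (ht : 0 ≤ t) :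
    eN (M - 1) t * eN (M + 1) t ≤ (eN M t) ^ 2 := by
  cases M with
  | zero =>
    simp [eN]
  | succ m =>
    simp only [Nat.succ_sub_one]
    set A := eN m t with hA
    set B := eN (m + 1) t with hB
    set C := eN (m + 2) t with hC
    have ha : (0 : ℝ) ≤ t ^ m / (Nat.factorial m) := by positivity
    have hBA : B = A + t ^ m / (Nat.factorial m) := eN_succ m t
    have hCB : C = B + t ^ (m + 1) / (Nat.factorial (m + 1)) := eN_succ (m + 1) t
    have hb : ((m : ℝ) + 1) * (t ^ (m + 1) / (Nat.factorial (m + 1)))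
        = t * (t ^ m / (Nat.factorial m)) := by
      have hfac : ((Nat.factorial m : ℝ)) ≠ 0 := by exact_mod_cast (Nat.factorial_pos m).ne'
      rw [Nat.factorial_succ]
      push_cast
      field_simp
      ring
    have hkey : t * B ≤ ((m : ℝ) + 1) * C := by
      have := eN_key (m + 1) ht
      push_cast at this
      convert this using 2
    -- goal : A * C ≤ B ^ 2
    have hmul : (t ^ m / (Nat.factorial m)) * (t * B)
        ≤ (t ^ m / (Nat.factorial m)) * (((m : ℝ) + 1) * C) :=
      mul_le_mul_of_nonneg_left hkey ha
    set a := t ^ m / (Nat.factorial m) with haa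
    set b := t ^ (m + 1) / (Nat.factorial (m + 1)) with hbb
    have hAB : A = B - a := by rw [hBA]; ring
    rw [hAB, hCB]
    have hmul' : a * (t * B) ≤ a * (((m : ℝ) + 1) * (B + b)) := by rw [← hCB]; exact hmul
    have hmpos : (0 : ℝ) < (m : ℝ) + 1 := by positivity
    have hbB : ((m : ℝ) + 1) * b * B = t * a * B := by rw [hb]
    have hba : ((m : ℝ) + 1) * b * a = t * a * a := by rw [hb]
    have h2 : ((m : ℝ) + 1) * ((B - a) * (B + b)) ≤ ((m : ℝ) + 1) * B ^ 2 := by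
      nlinarith [hmul', hbB, hba]
    exact le_of_mul_le_mul_left h2 hmpos

lemma f_hasDerivAt (N : ℕ) {t : ℝ} (ht : 0 < eN N t) :
    HasDerivAt (fun t => t - Real.log (eN N t)) (1 - eN (N - 1) t / eN N t) t :=
  (hasDerivAt_id t).sub ((eN_hasDerivAt N t).log ht.ne')

lemma f1_hasDerivAt (N : ℕ) {t : ℝ} (ht : 0 < eN N t) :
    HasDerivAt (fun t => 1 - eN (N - 1) t / eN N t)
      (-((eN (N - 1 - 1) t * eN N t - eN (N - 1) t * eN (N - 1) t) / (eN N t) ^ 2)) t := by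
  have h := ((eN_hasDerivAt (N - 1) t).div (eN_hasDerivAt N t) ht.ne')
  simpa using (hasDerivAt_const t (1 : ℝ)).fun_sub h

lemma f_mono_convex (N : ℕ) (hN : 1 ≤ N) :
    MonotoneOn (fun t : ℝ => t - Real.log (eN N t)) (Set.Ici 0) ∧
    ConvexOn ℝ (Set.Ici 0) (fun t : ℝ => t - Real.log (eN N t)) := by
  set f : ℝ → ℝ := fun t => t - Real.log (eN N t) with hf
  set S : Set ℝ := {t | 0 < eN N t} with hS
  have hSopen : IsOpen S := isOpen_lt continuous_const (eN_continuous N)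
  have hsub : Set.Ici (0 : ℝ) ⊆ S := fun t ht => eN_pos hN ht
  have hdf : ∀ t ∈ S, HasDerivAt f (1 - eN (N - 1) t / eN N t) t := fun t ht =>
    f_hasDerivAt N ht
  have hcont : ContinuousOn f (Set.Ici 0) :=
    continuousOn_id.sub (((eN_continuous N).continuousOn).log fun t ht => (eN_pos hN ht).ne')
  have hdiff : DifferentiableOn ℝ f (interior (Set.Ici (0 : ℝ))) := by
    rw [interior_Ici]
    intro t ht
    exact ((hdf t (hsub (Set.mem_Ici.2 ht.le))).differentiableAt).differentiableWithinAt
  have hderiv_nonneg : ∀ t ∈ interior (Set.Ici (0 : ℝ)), 0 ≤ deriv f t := by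
    rw [interior_Ici]
    intro t ht
    have htS := hsub (Set.mem_Ici.2 ht.le)
    rw [(hdf t htS).deriv]
    have hpos : 0 < eN N t := eN_pos hN ht.le
    have hle : eN (N - 1) t ≤ eN N t := by
      have h1 := eN_succ (N - 1) t
      rw [Nat.sub_add_cancel hN] at h1
      have h2 : 0 ≤ t ^ (N - 1) / (Nat.factorial (N - 1)) :=
        div_nonneg (pow_nonneg ht.le _) (by positivity)
      linarith
    have := (div_le_one hpos).2 hle
    linarith
  refine ⟨monotoneOn_of_deriv_nonneg (convex_Ici 0) hcont hdiff hderiv_nonneg, ?_⟩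
  have hev : ∀ t ∈ S, deriv f =ᶠ[nhds t] (fun t => 1 - eN (N - 1) t / eN N t) := fun t ht =>
    Filter.eventually_of_mem (hSopen.mem_nhds ht) (fun x hx => (hdf x hx).deriv)
  have hdiff2 : DifferentiableOn ℝ (deriv f) (interior (Set.Ici (0 : ℝ))) := by
    rw [interior_Ici]
    intro t ht
    have htS := hsub (Set.mem_Ici.2 ht.le)
    exact (((f1_hasDerivAt N (eN_pos hN ht.le)).differentiableAt).congr_of_eventuallyEq
      (hev t htS)).differentiableWithinAt
  have h2nonneg : ∀ t ∈ interior (Set.Ici (0 : ℝ)), 0 ≤ deriv^[2] f t := by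
    rw [interior_Ici]
    intro t ht
    have htS := hsub (Set.mem_Ici.2 ht.le)
    have hpos : 0 < eN N t := eN_pos hN ht.le
    show 0 ≤ deriv (deriv f) t
    rw [(hev t htS).deriv_eq, (f1_hasDerivAt N hpos).deriv]
    have hnum : eN (N - 1 - 1) t * eN N t ≤ eN (N - 1) t * eN (N - 1) t := by
      have h1 := eN_logconcave (N - 1) ht.le
      rw [Nat.sub_add_cancel hN] at h1
      nlinarith [h1]
    rw [neg_nonneg]
    apply div_nonpos_of_nonpos_of_nonneg
    · linarith
    · positivity
  exact convexOn_of_deriv2_nonneg (convex_Ici 0) hcont hdiff hdiff2 h2nonneg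

lemma q_convex_ineq (N : ℕ) (x y : EuclideanSpace ℝ (Fin 2)) {a b : ℝ}
    (ha : 0 ≤ a) (hb : 0 ≤ b) (hab : a + b = 1) :
    (N : ℝ) * ‖a • x + b • y‖ ^ 2 ≤ a * ((N : ℝ) * ‖x‖ ^ 2) + b * ((N : ℝ) * ‖y‖ ^ 2) := by
  have hn : ‖a • x + b • y‖ ≤ a * ‖x‖ + b * ‖y‖ := by
    calc ‖a • x + b • y‖ ≤ ‖a • x‖ + ‖b • y‖ := norm_add_le _ _
      _ = a * ‖x‖ + b * ‖y‖ := by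
          rw [norm_smul, norm_smul, Real.norm_eq_abs, Real.norm_eq_abs,
            abs_of_nonneg ha, abs_of_nonneg hb]
  have hsq : ‖a • x + b • y‖ ^ 2 ≤ a * ‖x‖ ^ 2 + b * ‖y‖ ^ 2 := by
    nlinarith [norm_nonneg (a • x + b • y), norm_nonneg x, norm_nonneg y,
      sq_nonneg (‖x‖ - ‖y‖), mul_nonneg ha hb, mul_nonneg (mul_nonneg ha hb) (sq_nonneg (‖x‖ - ‖y‖))]
  have hNn : (0 : ℝ) ≤ (N : ℝ) := Nat.cast_nonneg N
  calc (N : ℝ) * ‖a • x + b • y‖ ^ 2 ≤ (N : ℝ) * (a * ‖x‖ ^ 2 + b * ‖y‖ ^ 2) :=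
        mul_le_mul_of_nonneg_left hsq hNn
    _ = a * ((N : ℝ) * ‖x‖ ^ 2) + b * ((N : ℝ) * ‖y‖ ^ 2) := by ring

/-- The potential `g(z) = N|z|² - log e_N(N|z|²)` is convex on `ℝ²`; equivalently
`t ↦ t - log e_N(t)` is nondecreasing and convex on `[0,∞)`, and the measure with
density `φ^{1,N}` is log-concave. -/
theorem stmt15 (N : ℕ) (hN : 1 ≤ N) :
    ConvexOn ℝ Set.univ
      (fun z : EuclideanSpace ℝ (Fin 2) =>
        (N : ℝ) * ‖z‖ ^ 2 - Real.log (eN N ((N : ℝ) * ‖z‖ ^ 2)))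
    ∧ MonotoneOn (fun t : ℝ => t - Real.log (eN N t)) (Set.Ici 0)
    ∧ ConvexOn ℝ (Set.Ici 0) (fun t : ℝ => t - Real.log (eN N t))
    ∧ ConcaveOn ℝ Set.univ
        (fun z : EuclideanSpace ℝ (Fin 2) => Real.log (phi1 N z)) := by
  obtain ⟨hmono, hconv⟩ := f_mono_convex N hN
  have hq_mem : ∀ z : EuclideanSpace ℝ (Fin 2), (N : ℝ) * ‖z‖ ^ 2 ∈ Set.Ici (0 : ℝ) := by
    intro z
    have : (0 : ℝ) ≤ (N : ℝ) * ‖z‖ ^ 2 := by positivity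
    exact this
  have hg : ConvexOn ℝ Set.univ
      (fun z : EuclideanSpace ℝ (Fin 2) =>
        (N : ℝ) * ‖z‖ ^ 2 - Real.log (eN N ((N : ℝ) * ‖z‖ ^ 2))) := by
    refine ⟨convex_univ, ?_⟩
    intro x _ y _ a b ha hb hab
    simp only [smul_eq_mul]
    have h1 := q_convex_ineq N x y ha hb hab
    have hmemc : a * ((N : ℝ) * ‖x‖ ^ 2) + b * ((N : ℝ) * ‖y‖ ^ 2) ∈ Set.Ici (0 : ℝ) := by
      have hx := hq_mem x
      have hy := hq_mem y
      simp only [Set.mem_Ici] at *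
      have := add_nonneg (mul_nonneg ha hx) (mul_nonneg hb hy)
      exact this
    have h2 := hmono (hq_mem _) hmemc h1
    have h3 := hconv.2 (hq_mem x) (hq_mem y) ha hb hab
    simp only [smul_eq_mul] at h3
    exact h2.trans h3
  refine ⟨hg, hmono, hconv, ?_⟩
  have heq : (fun z : EuclideanSpace ℝ (Fin 2) => Real.log (phi1 N z))
      = fun z : EuclideanSpace ℝ (Fin 2) =>
        (-Real.log Real.pi) +
          -((N : ℝ) * ‖z‖ ^ 2 - Real.log (eN N ((N : ℝ) * ‖z‖ ^ 2))) := by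
    funext z
    have hB : 0 < eN N ((N : ℝ) * ‖z‖ ^ 2) := eN_pos hN (hq_mem z)
    unfold phi1
    rw [Real.log_mul (mul_ne_zero (inv_ne_zero Real.pi_ne_zero) (Real.exp_ne_zero _)) hB.ne',
      Real.log_mul (inv_ne_zero Real.pi_ne_zero) (Real.exp_ne_zero _),
      Real.log_exp, Real.log_inv]
    ring
  rw [heq]
  exact (concaveOn_const _ convex_univ).add hg.neg
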